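/- Let α ∈ (0, 1/2), j_0 = (log(1/α))³/α, j_1 = j_0². For j_0 ≤ j ≤ j_1 let P_j be the set of primes in [(1+α)^j, (1+α)^{j+1}) and Q_j the set of integers m ∈ [1, N/(1+α)^{j+1}] having no prime factor in ∪_{i ≤ j} P_i. Then the products m·r with r ∈ P_j, m ∈ Q_j, over all j ∈ [j_0, j_1], are pairwise distinct and lie in [1, N]; consequently ∑_{j_0 ≤ j ≤ j_1} |P_j|·|Q_j| ≤ N. -/

import Mathlib

open Classical
open Finset

/-- With `P_j` the primes in `[(1+α)^j, (1+α)^{j+1})` and `Q_j` the integers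
`m ∈ [1, N/(1+α)^{j+1}]` without prime factors in `∪_{i ≤ j} P_i`, the products `m·r`
with `r ∈ P_j`, `m ∈ Q_j`, `j ∈ [j_0, j_1]`, are pairwise distinct and lie in `[1, N]`;
consequently `∑_j |P_j|·|Q_j| ≤ N`. -/
theorem stmt_15 (N : ℕ) (hN : 0 < N) (α : ℝ) (hα0 : 0 < α) (hα1 : α < 1 / 2)
    (j₀ j₁ : ℝ)
    (hj₀ : j₀ = (Real.log (1 / α)) ^ 3 / α) (hj₁ : j₁ = j₀ ^ 2)
    (P Q : ℕ → Finset ℕ)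
    (hP : ∀ j, P j = (Finset.range (N + 1)).filter
      (fun r : ℕ => r.Prime ∧ (1 + α) ^ j ≤ (r : ℝ) ∧ (r : ℝ) < (1 + α) ^ (j + 1)))
    (hQ : ∀ j, Q j = (Finset.Icc 1 N).filter
      (fun m : ℕ => (m : ℝ) ≤ (N : ℝ) / (1 + α) ^ (j + 1) ∧
        ∀ q : ℕ, q.Prime → q ∣ m → ∀ i ≤ j, q ∉ P i)) :
    (∀ j ∈ Icc ⌈j₀⌉₊ ⌊j₁⌋₊, ∀ r ∈ P j, ∀ m ∈ Q j, 1 ≤ m * r ∧ m * r ≤ N) ∧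
    (∀ j ∈ Icc ⌈j₀⌉₊ ⌊j₁⌋₊, ∀ j' ∈ Icc ⌈j₀⌉₊ ⌊j₁⌋₊,
      ∀ r ∈ P j, ∀ m ∈ Q j, ∀ r' ∈ P j', ∀ m' ∈ Q j',
        m * r = m' * r' → j = j' ∧ r = r' ∧ m = m') ∧
    ∑ j ∈ Icc ⌈j₀⌉₊ ⌊j₁⌋₊, (P j).card * (Q j).card ≤ N := by
  have h1 : (1:ℝ) < 1 + α := by linarith
  have hpow : ∀ k : ℕ, (0:ℝ) < (1 + α) ^ k := fun k => pow_pos (by linarith) k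
  have hPmem : ∀ j r, r ∈ P j →
      r.Prime ∧ (1 + α) ^ j ≤ (r : ℝ) ∧ (r : ℝ) < (1 + α) ^ (j + 1) := by
    intro j r hr
    rw [hP] at hr
    exact (Finset.mem_filter.mp hr).2
  have hQmem : ∀ j m, m ∈ Q j → 1 ≤ m ∧ (m : ℝ) ≤ (N : ℝ) / (1 + α) ^ (j + 1) ∧
      ∀ q : ℕ, q.Prime → q ∣ m → ∀ i ≤ j, q ∉ P i := by
    intro j m hm
    rw [hQ] at hm
    obtain ⟨hm1, hm2⟩ := Finset.mem_filter.mp hm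
    exact ⟨(Finset.mem_Icc.mp hm1).1, hm2.1, hm2.2⟩
  have hbound : ∀ j, ∀ r ∈ P j, ∀ m ∈ Q j, 1 ≤ m * r ∧ m * r ≤ N := by
    intro j r hr m hm
    obtain ⟨hrp, _, hrlt⟩ := hPmem j r hr
    obtain ⟨hm1, hmle, _⟩ := hQmem j m hm
    constructor
    · exact Nat.one_le_iff_ne_zero.mpr (Nat.mul_ne_zero (by omega) hrp.pos.ne')
    · have hmpos : (0:ℝ) < (m:ℝ) := by exact_mod_cast hm1
      have h2 : ((m * r : ℕ) : ℝ) < (m:ℝ) * (1 + α) ^ (j + 1) := by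
        push_cast
        exact mul_lt_mul_of_pos_left hrlt hmpos
      have h3 : (m:ℝ) * (1 + α) ^ (j + 1) ≤ (N:ℝ) := by
        rw [le_div_iff₀ (hpow (j+1))] at hmle
        exact hmle
      exact_mod_cast (h2.trans_le h3).le
  have hdist : ∀ j j', j ≤ j' → ∀ r ∈ P j, ∀ m ∈ Q j, ∀ r' ∈ P j', ∀ m' ∈ Q j',
      m * r = m' * r' → j = j' ∧ r = r' ∧ m = m' := by
    intro j j' hjj' r hr m hm r' hr' m' hm' heq
    obtain ⟨hrp, hrge, hrlt⟩ := hPmem j r hr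
    obtain ⟨hrp', hrge', hrlt'⟩ := hPmem j' r' hr'
    obtain ⟨hm1', _, hnf'⟩ := hQmem j' m' hm'
    have hrdvd : r ∣ m' * r' := heq ▸ Dvd.intro_left m rfl
    have hrr' : r = r' := by
      rcases (Nat.Prime.dvd_mul hrp).mp hrdvd with h | h
      · exact absurd hr (hnf' r hrp h j hjj')
      · exact (Nat.prime_dvd_prime_iff_eq hrp hrp').mp h
    have hjj : j = j' := by
      by_contra hne
      have hlt : j + 1 ≤ j' := by omega
      have : (r:ℝ) < (r':ℝ) :=
        hrlt.trans_le ((pow_le_pow_right₀ h1.le hlt).trans hrge')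
      rw [hrr'] at this
      exact lt_irrefl _ this
    refine ⟨hjj, hrr', ?_⟩
    rw [hrr'] at heq
    exact Nat.eq_of_mul_eq_mul_right hrp'.pos heq
  refine ⟨fun j _ => hbound j, ?_, ?_⟩
  · intro j _ j' _ r hr m hm r' hr' m' hm' heq
    rcases le_total j j' with h | h
    · exact hdist j j' h r hr m hm r' hr' m' hm' heq
    · obtain ⟨h1, h2, h3⟩ := hdist j' j h r' hr' m' hm' r hr m hm heq.symm
      exact ⟨h1.symm, h2.symm, h3.symm⟩
  · have hcard : ∑ j ∈ Icc ⌈j₀⌉₊ ⌊j₁⌋₊, (P j).card * (Q j).card =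
        ((Icc ⌈j₀⌉₊ ⌊j₁⌋₊).sigma (fun j => P j ×ˢ Q j)).card := by
      rw [Finset.card_sigma]
      exact Finset.sum_congr rfl fun j _ => (Finset.card_product _ _).symm
    rw [hcard]
    have := Finset.card_le_card_of_injOn
      (f := fun x : Σ _ : ℕ, ℕ × ℕ => x.2.2 * x.2.1)
      (s := (Icc ⌈j₀⌉₊ ⌊j₁⌋₊).sigma (fun j => P j ×ˢ Q j))
      (t := Finset.Icc 1 N)
      (by
        rintro ⟨j, r, m⟩ hx
        rw [Finset.mem_coe, Finset.mem_sigma, Finset.mem_product] at hx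
        exact Finset.mem_Icc.mpr (hbound j r hx.2.1 m hx.2.2))
      (by
        rintro ⟨j, r, m⟩ hx ⟨j', r', m'⟩ hy heq
        rw [Finset.mem_coe, Finset.mem_sigma, Finset.mem_product] at hx hy
        simp only at heq
        rcases le_total j j' with h | h
        · obtain ⟨h1, h2, h3⟩ := hdist j j' h r hx.2.1 m hx.2.2 r' hy.2.1 m' hy.2.2 heq
          subst h1; subst h2; subst h3; rfl
        · obtain ⟨h1, h2, h3⟩ := hdist j' j h r' hy.2.1 m' hy.2.2 r hx.2.1 m hx.2.2 heq.symm
          subst h1; subst h2; subst h3; rfl)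
    simpa using this
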